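/- Let T be a Θ-twisted O-operator on a 3-Lie algebra g with respect to (V,ρ). Define ρ_Θ: Λ²V → gl(g) by ρ_Θ(u,v)x = [Tu,Tv,x]_g - T(ρ(Tv,x)u + ρ(x,Tu)v + Θ(x,Tu,Tv)). Then (g, ρ_Θ) is a representation of the 3-Lie algebra (V, [·,·,·]_T). -/

import Mathlib

universe u

def Skew12 {A M : Type*} [Neg M] (f : A → A → A → M) : Prop :=
  ∀ x y z, f x y z = - f y x z

def Skew23 {A M : Type*} [Neg M] (f : A → A → A → M) : Prop :=
  ∀ x y z, f x y z = - f x z y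

def LinFst (K : Type*) [Field K] {A M : Type*} [AddCommGroup A] [Module K A]
    [AddCommGroup M] [Module K M] (f : A → A → A → M) : Prop :=
  ∀ (a : K) (x x' y z : A), f (a • x + x') y z = a • f x y z + f x' y z

def LinThd (K : Type*) [Field K] {A M : Type*} [AddCommGroup A] [Module K A]
    [AddCommGroup M] [Module K M] (f : A → A → A → M) : Prop :=
  ∀ (a : K) (x y z z' : A), f x y (a • z + z') = a • f x y z + f x y z'

/-- A 3-Lie algebra structure: a trilinear skew-symmetric bracket satisfying
the Filippov (fundamental) identity. -/
def IsThreeLie (K : Type*) [Field K] {A : Type*} [AddCommGroup A] [Module K A]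
    (b : A → A → A → A) : Prop :=
  LinFst K b ∧ Skew12 b ∧ Skew23 b ∧
    ∀ x1 x2 x3 x4 x5 : A,
      b x1 x2 (b x3 x4 x5) =
        b (b x1 x2 x3) x4 x5 + b x3 (b x1 x2 x4) x5 + b x3 x4 (b x1 x2 x5)

/-- A representation of a 3-Lie algebra on a module. -/
def IsRep (K : Type*) [Field K] {A M : Type*} [AddCommGroup A] [Module K A]
    [AddCommGroup M] [Module K M] (b : A → A → A → A) (ρ : A → A → M → M) : Prop :=
  (∀ (a : K) (x x' y : A) (v : M), ρ (a • x + x') y v = a • ρ x y v + ρ x' y v) ∧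
  (∀ (x y : A) (v : M), ρ x y v = - ρ y x v) ∧
  (∀ (x y : A) (a : K) (v v' : M), ρ x y (a • v + v') = a • ρ x y v + ρ x y v') ∧
  (∀ (x1 x2 x3 x4 : A) (v : M),
      ρ x1 x2 (ρ x3 x4 v) =
        ρ (b x1 x2 x3) x4 v + ρ x3 (b x1 x2 x4) v + ρ x3 x4 (ρ x1 x2 v)) ∧
  (∀ (x1 x2 x3 x4 : A) (v : M),
      ρ (b x1 x2 x3) x4 v =
        ρ x1 x2 (ρ x3 x4 v) + ρ x2 x3 (ρ x1 x4 v) + ρ x3 x1 (ρ x2 x4 v))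

/-- A 2-cocycle in the Chevalley-Eilenberg complex of a 3-Lie algebra. -/
def IsCocycle (K : Type*) [Field K] {A M : Type*} [AddCommGroup A] [Module K A]
    [AddCommGroup M] [Module K M] (b : A → A → A → A) (ρ : A → A → M → M)
    (Θ : A → A → A → M) : Prop :=
  LinFst K Θ ∧ Skew12 Θ ∧ Skew23 Θ ∧
    ∀ x1 x2 y1 y2 y3 : A,
      Θ x1 x2 (b y1 y2 y3) + ρ x1 x2 (Θ y1 y2 y3) =
        Θ (b x1 x2 y1) y2 y3 + Θ y1 (b x1 x2 y2) y3 + Θ y1 y2 (b x1 x2 y3)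
          + ρ y2 y3 (Θ x1 x2 y1) + ρ y3 y1 (Θ x1 x2 y2) + ρ y1 y2 (Θ x1 x2 y3)

/-- A Θ-twisted O-operator on a 3-Lie algebra. -/
def IsTwistedO {K : Type*} [Field K] {A M : Type*} [AddCommGroup A] [Module K A]
    [AddCommGroup M] [Module K M] (b : A → A → A → A) (ρ : A → A → M → M)
    (Θ : A → A → A → M) (T : M →ₗ[K] A) : Prop :=
  ∀ u v w : M,
    b (T u) (T v) (T w) =
      T (ρ (T u) (T v) w + ρ (T v) (T w) u + ρ (T w) (T u) v + Θ (T u) (T v) (T w))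

/-- The Θ-twisted semidirect product bracket on A × M. -/
def sdBracket {A M : Type*} [AddCommGroup M]
    (b : A → A → A → A) (ρ : A → A → M → M) (Θ : A → A → A → M) :
    A × M → A × M → A × M → A × M :=
  fun p q r =>
    (b p.1 q.1 r.1,
      ρ p.1 q.1 r.2 + ρ r.1 p.1 q.2 + ρ q.1 r.1 p.2 + Θ p.1 q.1 r.1)

/-- The bracket [u,v,w]_T induced on V by a twisted O-operator T. -/
def indBracket {K : Type*} [Field K] {A M : Type*} [AddCommGroup A] [Module K A]
    [AddCommGroup M] [Module K M] (ρ : A → A → M → M) (Θ : A → A → A → M)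
    (T : M →ₗ[K] A) : M → M → M → M :=
  fun u v w =>
    ρ (T u) (T v) w + ρ (T v) (T w) u + ρ (T w) (T u) v + Θ (T u) (T v) (T w)

/-- Chevalley-Eilenberg coboundary of a 1-cochain θ : g → V. -/
def cobound {K : Type*} [Field K] {A M : Type*} [AddCommGroup A] [Module K A]
    [AddCommGroup M] [Module K M] (b : A → A → A → A) (ρ : A → A → M → M)
    (θ : A →ₗ[K] M) : A → A → A → M :=
  fun x y z => ρ x y (θ z) + ρ y z (θ x) + ρ z x (θ y) - θ (b x y z)

/-- Cyclic sum {x,y,z}^C = {x,y,z} + {y,z,x} + {z,x,y}. -/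
def cycSum {A : Type*} [AddCommGroup A] (m : A → A → A → A) : A → A → A → A :=
  fun x y z => m x y z + m y z x + m z x y

/-- Subadjacent bracket [x,y,z]_* = {x,y,z}^C + [[x,y,z]] of a 3-NS-Lie algebra. -/
def nsStar {A : Type*} [AddCommGroup A] (m n : A → A → A → A) : A → A → A → A :=
  fun x y z => cycSum m x y z + n x y z

/-- A 3-NS-Lie algebra structure on A given by operations m = {·,·,·} and n = [[·,·,·]]. -/
def IsThreeNS (K : Type*) [Field K] {A : Type*} [AddCommGroup A] [Module K A]
    (m n : A → A → A → A) : Prop :=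
  LinFst K m ∧ LinThd K m ∧ Skew12 m ∧ LinFst K n ∧ Skew12 n ∧ Skew23 n ∧
  (∀ x1 x2 x3 x4 x5 : A,
      m x1 x2 (m x3 x4 x5) =
        m (cycSum m x1 x2 x3) x4 x5 + m (n x1 x2 x3) x4 x5
          + m x3 (cycSum m x1 x2 x4) x5 + m x3 (n x1 x2 x4) x5
          + m x3 x4 (m x1 x2 x5)) ∧
  (∀ x1 x2 x3 x4 x5 : A,
      m (cycSum m x1 x2 x3) x4 x5 + m (n x1 x2 x3) x4 x5 =
        m x1 x2 (m x3 x4 x5) + m x2 x3 (m x1 x4 x5) + m x3 x1 (m x2 x4 x5)) ∧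
  (∀ x1 x2 x3 x4 x5 : A,
      n x1 x2 (nsStar m n x3 x4 x5) + m x1 x2 (n x3 x4 x5) =
        n (nsStar m n x1 x2 x3) x4 x5 + n x3 (nsStar m n x1 x2 x4) x5
          + n x3 x4 (nsStar m n x1 x2 x5)
          + m x4 x5 (n x1 x2 x3) + m x5 x3 (n x1 x2 x4) + m x3 x4 (n x1 x2 x5))

/-- Nijenhuis operator on a 3-Lie algebra. -/
def IsNijenhuis {K : Type*} [Field K] {A : Type*} [AddCommGroup A] [Module K A]
    (b : A → A → A → A) (N : A →ₗ[K] A) : Prop :=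
  ∀ x y z : A,
    b (N x) (N y) (N z) =
      N (b (N x) (N y) z + b (N x) y (N z) + b x (N y) (N z)
        - N (b (N x) y z + b x (N y) z + b x y (N z)) + N (N (b x y z)))

/-- A Lie algebra structure (bilinear skew bracket with Jacobi identity). -/
def IsLie (K : Type*) [Field K] {A : Type*} [AddCommGroup A] [Module K A]
    (br : A → A → A) : Prop :=
  (∀ (a : K) (x x' y : A), br (a • x + x') y = a • br x y + br x' y) ∧
  (∀ x y : A, br x y = - br y x) ∧
  (∀ x y z : A, br x (br y z) = br (br x y) z + br y (br x z))

/-- A representation of a Lie algebra. -/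
def IsLieRep (K : Type*) [Field K] {A M : Type*} [AddCommGroup A] [Module K A]
    [AddCommGroup M] [Module K M] (br : A → A → A) (ρ : A → M → M) : Prop :=
  (∀ (a : K) (x x' : A) (v : M), ρ (a • x + x') v = a • ρ x v + ρ x' v) ∧
  (∀ (x : A) (a : K) (v v' : M), ρ x (a • v + v') = a • ρ x v + ρ x v') ∧
  (∀ (x y : A) (v : M), ρ (br x y) v = ρ x (ρ y v) - ρ y (ρ x v))

/-- A Chevalley-Eilenberg 2-cocycle of a Lie algebra. -/
def IsLieCocycle (K : Type*) [Field K] {A M : Type*} [AddCommGroup A] [Module K A]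
    [AddCommGroup M] [Module K M] (br : A → A → A) (ρ : A → M → M)
    (Θ : A → A → M) : Prop :=
  (∀ (a : K) (x x' y : A), Θ (a • x + x') y = a • Θ x y + Θ x' y) ∧
  (∀ x y : A, Θ x y = - Θ y x) ∧
  (∀ x y z : A,
      ρ x (Θ y z) + ρ y (Θ z x) + ρ z (Θ x y)
        + Θ x (br y z) + Θ y (br z x) + Θ z (br x y) = 0)

/-- A Θ-twisted O-operator on a Lie algebra. -/
def IsLieTwistedO {K : Type*} [Field K] {A M : Type*} [AddCommGroup A] [Module K A]
    [AddCommGroup M] [Module K M] (br : A → A → A) (ρ : A → M → M)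
    (Θ : A → A → M) (T : M →ₗ[K] A) : Prop :=
  ∀ u v : M, br (T u) (T v) = T (ρ (T u) v - ρ (T v) u + Θ (T u) (T v))

/-- The 3-Lie bracket induced by a Lie bracket and a trace map τ. -/
def inducedTri {K : Type*} [Field K] {A : Type*} [AddCommGroup A] [Module K A]
    (br : A → A → A) (τ : A →ₗ[K] K) : A → A → A → A :=
  fun x y z => τ x • br y z + τ y • br z x + τ z • br x y

/-- The induced representation ρ_τ of the induced 3-Lie algebra. -/
def rhoTau {K : Type*} [Field K] {A M : Type*} [AddCommGroup A] [Module K A]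
    [AddCommGroup M] [Module K M] (ρ : A → M → M) (τ : A →ₗ[K] K) :
    A → A → M → M :=
  fun x y v => τ x • ρ y v - τ y • ρ x v

/-- The induced 2-cocycle Θ_τ on the induced 3-Lie algebra. -/
def thetaTau {K : Type*} [Field K] {A M : Type*} [AddCommGroup A] [Module K A]
    [AddCommGroup M] [Module K M] (Θ : A → A → M) (τ : A →ₗ[K] K) :
    A → A → A → M :=
  fun x y z => τ x • Θ y z + τ y • Θ z x + τ z • Θ x y

/-- An NS-Lie algebra structure on A. -/
def IsNSLie (K : Type*) [Field K] {A : Type*} [AddCommGroup A] [Module K A]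
    (m n : A → A → A) : Prop :=
  (∀ (a : K) (x x' y : A), m (a • x + x') y = a • m x y + m x' y) ∧
  (∀ (x : A) (a : K) (y y' : A), m x (a • y + y') = a • m x y + m x y') ∧
  (∀ (a : K) (x x' y : A), n (a • x + x') y = a • n x y + n x' y) ∧
  (∀ x y : A, n x y = - n y x) ∧
  (∀ x y z : A,
      m (m x y) z - m x (m y z) - m (m y x) z + m y (m x z) + m (n x y) z = 0) ∧
  (∀ x y z : A,
      n x (m y z - m z y + n y z) + n y (m z x - m x z + n z x)
        + n z (m x y - m y x + n x y)
        + m x (n y z) + m y (n z x) + m z (n x y) = 0)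


section AuxStmt8

variable {K : Type*} [Field K] {A M N : Type*} [AddCommGroup A] [Module K A]
    [AddCommGroup M] [Module K M] [AddCommGroup N] [Module K N]

theorem tri_zero1 {f : A → A → A → N} (hl : LinFst K f) (y z : A) : f 0 y z = 0 := by
  have h := hl 1 0 0 y z
  simp only [one_smul, smul_zero, add_zero, zero_add] at h
  exact right_eq_add.mp h

theorem tri_neg1 {f : A → A → A → N} (hl : LinFst K f) (x y z : A) :
    f (-x) y z = - f x y z := by
  have h := hl (-1) x 0 y z
  simpa [tri_zero1 hl] using h

theorem tri_lin2 {f : A → A → A → N} (hl : LinFst K f) (h12 : Skew12 f)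
    (a : K) (x y y' z : A) : f x (a • y + y') z = a • f x y z + f x y' z := by
  rw [h12 x (a • y + y') z, hl a y y' x z, h12 y x z, h12 y' x z]
  module

theorem tri_lin3 {f : A → A → A → N} (hl : LinFst K f) (h12 : Skew12 f) (h23 : Skew23 f)
    (a : K) (x y z z' : A) : f x y (a • z + z') = a • f x y z + f x y z' := by
  linear_combination (norm := module) h23 x y (a • z + z') - tri_lin2 hl h12 a x z z' y
    - a • h23 x y z - h23 x y z'

theorem tri_add3 {f : A → A → A → N} (hl : LinFst K f) (h12 : Skew12 f) (h23 : Skew23 f)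
    (x y z z' : A) : f x y (z + z') = f x y z + f x y z' := by
  simpa using tri_lin3 hl h12 h23 1 x y z z'

theorem tri_cyc {f : A → A → A → N} (h12 : Skew12 f) (h23 : Skew23 f)
    (x y z : A) : f x y z = f z x y := by
  linear_combination (norm := module) h23 x y z - h12 z x y

theorem rho_zero3 {ρ : A → A → M → M}
    (h3 : ∀ (x y : A) (a : K) (v v' : M), ρ x y (a • v + v') = a • ρ x y v + ρ x y v')
    (x y : A) : ρ x y 0 = 0 := by
  have h := h3 x y 1 0 0
  simp only [one_smul, smul_zero, add_zero, zero_add] at h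
  exact right_eq_add.mp h

theorem rho_add3 {ρ : A → A → M → M}
    (h3 : ∀ (x y : A) (a : K) (v v' : M), ρ x y (a • v + v') = a • ρ x y v + ρ x y v')
    (x y : A) (u v : M) : ρ x y (u + v) = ρ x y u + ρ x y v := by
  simpa using h3 x y 1 u v

theorem rho_neg3 {ρ : A → A → M → M}
    (h3 : ∀ (x y : A) (a : K) (v v' : M), ρ x y (a • v + v') = a • ρ x y v + ρ x y v')
    (x y : A) (v : M) : ρ x y (-v) = - ρ x y v := by
  simpa [rho_zero3 h3] using h3 x y (-1) v 0

theorem rho_lin2 {ρ : A → A → M → M}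
    (h1 : ∀ (a : K) (x x' y : A) (v : M), ρ (a • x + x') y v = a • ρ x y v + ρ x' y v)
    (hs : ∀ (x y : A) (v : M), ρ x y v = - ρ y x v)
    (a : K) (x y y' : A) (v : M) : ρ x (a • y + y') v = a • ρ x y v + ρ x y' v := by
  rw [hs x (a • y + y') v, h1 a y y' x v, hs y x v, hs y' x v]
  module

/-- The second fundamental identity holds in any 3-Lie algebra. -/
theorem threeLie_id5 {A' : Type*} [AddCommGroup A'] [Module K A'] {b : A' → A' → A' → A'}
    (hb : IsThreeLie K b) (x1 x2 x3 x4 x5 : A') :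
    b (b x1 x2 x3) x4 x5 =
      b x1 x2 (b x3 x4 x5) + b x2 x3 (b x1 x4 x5) + b x3 x1 (b x2 x4 x5) := by
  obtain ⟨hl, h12, h23, hF⟩ := hb
  have p213 : ∀ x y z, b x y z = - b y x z := h12
  have p132 : ∀ x y z, b x y z = - b x z y := h23
  have p231 : ∀ x y z, b x y z = b y z x := fun x y z => by
    linear_combination (norm := module) h12 x y z - h23 y x z
  have p312 : ∀ x y z, b x y z = b z x y := fun x y z => by
    linear_combination (norm := module) h23 x y z - h12 x z y
  have p321 : ∀ x y z, b x y z = - b z y x := fun x y z => by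
    linear_combination (norm := module) h23 x y z + p312 z y x
  have bneg1 : ∀ x y z, b (-x) y z = - b x y z := tri_neg1 hl
  linear_combination (norm := module) - (hF x1 x2 x3 x4 x5) + (hF x1 x3 x2 x4 x5) + (hF x1 x4 x2 x3 x5) - (hF x1 x5 x2 x3 x4) + (hF x2 x3 x1 x4 x5) - (p312 x2 x3 (b x1 x4 x5)) - (p321 x3 x1 (b x2 x4 x5)) - (p213 x3 (b x1 x2 x4) x5) - (p312 x3 x4 (b x1 x2 x5)) - (p312 x1 x3 (b x2 x4 x5)) + (congrArg (fun w => b w x4 x5) (p132 x1 x3 x2)) + (bneg1 (b x1 x2 x3) x4 x5) + (p213 x2 (b x1 x3 x4) x5) + (p312 x2 x4 (b x1 x3 x5)) + (congrArg (fun w => b w x3 x5) (p132 x1 x4 x2)) + (bneg1 (b x1 x2 x4) x3 x5) + (p213 x2 (b x1 x4 x3) x5) - (congrArg (fun w => b w x2 x5) (p132 x1 x4 x3)) - (bneg1 (b x1 x3 x4) x2 x5) + (p312 x1 x5 (b x2 x3 x4)) - (congrArg (fun w => b w x3 x4) (p132 x1 x5 x2)) - (bneg1 (b x1 x2 x5)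 x3 x4) - (p213 x2 (b x1 x5 x3) x4) + (congrArg (fun w => b w x2 x4) (p132 x1 x5 x3)) + (bneg1 (b x1 x3 x5) x2 x4) - (p312 x2 x3 (b x1 x5 x4)) - (congrArg (fun w => b w x2 x3) (p132 x1 x5 x4)) - (bneg1 (b x1 x4 x5) x2 x3) + (congrArg (fun w => b w x4 x5) (p312 x2 x3 x1)) + (p213 x1 (b x2 x3 x4) x5)

theorem sd_isThreeLie {b : A → A → A → A} {ρ : A → A → M → M} {Θ : A → A → A → M}
    (hb : IsThreeLie K b) (hρ : IsRep K b ρ) (hΘ : IsCocycle K b ρ Θ) :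
    IsThreeLie K (sdBracket b ρ Θ) := by
  obtain ⟨hbl, hb12, hb23, hbF⟩ := hb
  obtain ⟨rh1, rhs, rh3, hρ4, hρ5⟩ := hρ
  obtain ⟨hΘl, hΘ12, hΘ23, hC⟩ := hΘ
  refine ⟨?_, ?_, ?_, ?_⟩
  · intro a x x' y z
    simp only [sdBracket, Prod.fst_add, Prod.snd_add, Prod.smul_fst, Prod.smul_snd,
      Prod.mk_add_mk, Prod.smul_mk, Prod.mk.injEq]
    refine ⟨hbl a x.1 x'.1 y.1 z.1, ?_⟩
    rw [rh1 a x.1 x'.1 y.1 z.2, rho_lin2 rh1 rhs a z.1 x.1 x'.1 y.2,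
      rh3 y.1 z.1 a x.2 x'.2, hΘl a x.1 x'.1 y.1 z.1]
    module
  · intro p q r
    simp only [sdBracket, Prod.neg_mk, Prod.mk.injEq]
    refine ⟨hb12 p.1 q.1 r.1, ?_⟩
    linear_combination (norm := module) rhs p.1 q.1 r.2 + rhs r.1 p.1 q.2
      + rhs q.1 r.1 p.2 + hΘ12 p.1 q.1 r.1
  · intro p q r
    simp only [sdBracket, Prod.neg_mk, Prod.mk.injEq]
    refine ⟨hb23 p.1 q.1 r.1, ?_⟩
    linear_combination (norm := module) rhs p.1 q.1 r.2 + rhs r.1 p.1 q.2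
      + rhs q.1 r.1 p.2 + hΘ23 p.1 q.1 r.1
  · intro p q r s t
    simp only [sdBracket, Prod.mk_add_mk, Prod.mk.injEq]
    refine ⟨hbF p.1 q.1 r.1 s.1 t.1, ?_⟩
    simp only [rho_add3 rh3]
    linear_combination (norm := module) hρ4 p.1 q.1 r.1 s.1 t.2 + hρ4 p.1 q.1 t.1 r.1 s.2
      + hρ4 p.1 q.1 s.1 t.1 r.2 + hρ5 r.1 s.1 t.1 p.1 q.2 + hC p.1 q.1 r.1 s.1 t.1
      + rhs q.1 (b r.1 s.1 t.1) p.2 - hρ5 r.1 s.1 t.1 q.1 p.2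
      - congrArg (fun m => ρ r.1 s.1 m) (rhs t.1 q.1 p.2) - rho_neg3 rh3 r.1 s.1 (ρ q.1 t.1 p.2)
      - congrArg (fun m => ρ s.1 t.1 m) (rhs r.1 q.1 p.2) - rho_neg3 rh3 s.1 t.1 (ρ q.1 r.1 p.2)
      - congrArg (fun m => ρ t.1 r.1 m) (rhs s.1 q.1 p.2) - rho_neg3 rh3 t.1 r.1 (ρ q.1 s.1 p.2)

end AuxStmt8

/-- ρ_Θ makes g a representation of the induced 3-Lie algebra (V,[·,·,·]_T). -/
theorem stmt8 {K : Type*} [Field K] {A M : Type*} [AddCommGroup A] [Module K A]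
    [AddCommGroup M] [Module K M]
    (b : A → A → A → A) (ρ : A → A → M → M) (Θ : A → A → A → M) (T : M →ₗ[K] A)
    (hb : IsThreeLie K b) (hρ : IsRep K b ρ) (hΘ : IsCocycle K b ρ Θ)
    (hT : IsTwistedO b ρ Θ T) :
    IsRep K (indBracket ρ Θ T)
      (fun u v x => b (T u) (T v) x
        - T (ρ (T v) x u + ρ x (T u) v + Θ x (T u) (T v))) := by
  have hB : IsThreeLie K (sdBracket b ρ Θ) := sd_isThreeLie hb hρ hΘ
  obtain ⟨hbl, hb12, hb23, hbF⟩ := hb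
  obtain ⟨rh1, rhs, rh3, hρ4, hρ5⟩ := hρ
  obtain ⟨hΘl, hΘ12, hΘ23, hC⟩ := hΘ
  have key1 : ∀ u v w : M, sdBracket b ρ Θ (T u, u) (T v, v) (T w, w)
      = (T (indBracket ρ Θ T u v w), indBracket ρ Θ T u v w) := by
    intro u v w
    refine Prod.ext ?_ ?_
    · simp only [sdBracket, indBracket]
      exact hT u v w
    · simp only [sdBracket, indBracket]
      abel
  have key2 : ∀ (u v : M) (x : A),
      b (T u) (T v) x - T (ρ (T v) x u + ρ x (T u) v + Θ x (T u) (T v))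
        = (sdBracket b ρ Θ (T u, u) (T v, v) ((x, 0) : A × M)).1
          - T (sdBracket b ρ Θ (T u, u) (T v, v) ((x, 0) : A × M)).2 := by
    intro u v x
    simp only [sdBracket]
    rw [rho_zero3 rh3 (T u) (T v), tri_cyc hΘ12 hΘ23 (T u) (T v) x]
    simp only [map_add, zero_add]
    abel
  have key3 : ∀ (u v : M) (p : A × M),
      (sdBracket b ρ Θ (T u, u) (T v, v) p).1 - T (sdBracket b ρ Θ (T u, u) (T v, v) p).2
        = b (T u) (T v) (p.1 - T p.2)
          - T (ρ (T v) (p.1 - T p.2) u + ρ (p.1 - T p.2) (T u) v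
                + Θ (p.1 - T p.2) (T u) (T v)) := by
    intro u v p
    have hsplit : ((p.1 - T p.2, 0) : A × M) + (T p.2, p.2) = p := by
      refine Prod.ext ?_ ?_
      · simp
      · simp
    have hBadd3 := tri_add3 hB.1 hB.2.1 hB.2.2.1
    conv_lhs => rw [← hsplit]
    rw [hBadd3, key1 u v p.2]
    simp only [Prod.fst_add, Prod.snd_add, map_add]
    have e := key2 u v (p.1 - T p.2)
    simp only [map_add] at e
    linear_combination (norm := module) -e
  unfold IsRep
  refine ⟨?_, ?_, ?_, ?_, ?_⟩
  · intro a u u' v x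
    dsimp only
    simp only [map_add, map_smul]
    rw [hbl a (T u) (T u') (T v) x, rh3 (T v) x a u u',
      rho_lin2 rh1 rhs a x (T u) (T u') v, tri_lin2 hΘl hΘ12 a x (T u) (T u') (T v)]
    simp only [map_add, map_smul]
    module
  · intro u v x
    dsimp only
    have hS : ρ (T v) x u + ρ x (T u) v + Θ x (T u) (T v)
        = -(ρ (T u) x v + ρ x (T v) u + Θ x (T v) (T u)) := by
      linear_combination (norm := module) rhs (T v) x u + rhs x (T u) v + hΘ23 x (T u) (T v)
    rw [hb12 (T u) (T v) x, hS, map_neg]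
    abel
  · intro u v a x x'
    dsimp only
    rw [tri_lin3 hbl hb12 hb23 a (T u) (T v) x x', rho_lin2 rh1 rhs a (T v) x x' u,
      rh1 a x x' (T u) v, hΘl a x x' (T u) (T v)]
    simp only [map_add, map_smul]
    module
  · intro u1 u2 u3 u4 x
    dsimp only
    have πsum3 : ∀ P Q S : A × M, (P + Q + S).1 - T (P + Q + S).2
        = ((P.1 - T P.2) + (Q.1 - T Q.2) + (S.1 - T S.2)) := by
      intro P Q S
      simp only [Prod.fst_add, Prod.snd_add, map_add]
      abel
    rw [key2 u3 u4 x,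
      ← key3 u1 u2 (sdBracket b ρ Θ (T u3, u3) (T u4, u4) ((x, 0) : A × M)),
      hB.2.2.2 (T u1, u1) (T u2, u2) (T u3, u3) (T u4, u4) ((x, 0) : A × M),
      key1 u1 u2 u3, key1 u1 u2 u4, πsum3,
      ← key2 (indBracket ρ Θ T u1 u2 u3) u4 x,
      ← key2 u3 (indBracket ρ Θ T u1 u2 u4) x,
      key3 u3 u4 (sdBracket b ρ Θ (T u1, u1) (T u2, u2) ((x, 0) : A × M)),
      ← key2 u1 u2 x]
  · intro u1 u2 u3 u4 x
    dsimp only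
    have πsum3 : ∀ P Q S : A × M, (P + Q + S).1 - T (P + Q + S).2
        = ((P.1 - T P.2) + (Q.1 - T Q.2) + (S.1 - T S.2)) := by
      intro P Q S
      simp only [Prod.fst_add, Prod.snd_add, map_add]
      abel
    rw [key2 (indBracket ρ Θ T u1 u2 u3) u4 x, ← key1 u1 u2 u3,
      threeLie_id5 hB (T u1, u1) (T u2, u2) (T u3, u3) (T u4, u4) ((x, 0) : A × M),
      πsum3,
      key3 u1 u2 (sdBracket b ρ Θ (T u3, u3) (T u4, u4) ((x, 0) : A × M)),
      ← key2 u3 u4 x,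
      key3 u2 u3 (sdBracket b ρ Θ (T u1, u1) (T u4, u4) ((x, 0) : A × M)),
      ← key2 u1 u4 x,
      key3 u3 u1 (sdBracket b ρ Θ (T u2, u2) (T u4, u4) ((x, 0) : A × M)),
      ← key2 u2 u4 x]
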